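/- Let m ≥ 1 and let f : ℝ^m → [0,∞) be a C² function such that f(θ̄) = 0 for some θ̄ ∈ ℝ^m, and such that there exist c₁, γ, R > 0 with f(θ) ≥ c₁|θ|^γ whenever |θ| ≥ R. Then for every η > 0 the function exp(−f/η) is Lebesgue integrable on ℝ^m with ∫_{ℝ^m} exp(−f(θ)/η) dθ > 0, and for every ε > 0, lim_{η→0⁺} ( ∫_{{θ : f(θ) ≥ ε}} exp(−f(θ)/η) dθ ) / ( ∫_{ℝ^m} exp(−f(θ)/η) dθ ) = 0; that is, the Gibbs probability measures with densities proportional to exp(−f/η) concentrate on the sublevel sets {f < ε} as η → 0. -/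

import Mathlib

open MeasureTheory Filter Metric Set
open scoped Topology ENNReal

noncomputable section

private lemma gibbs_aux_integrable (m : ℕ)
    (f : EuclideanSpace ℝ (Fin m) → ℝ) (hf0 : ∀ θ, 0 ≤ f θ) (hcont : Continuous f)
    (c₁ γ R : ℝ) (hc₁ : 0 < c₁) (hγ : 0 < γ)
    (hgrow : ∀ θ : EuclideanSpace ℝ (Fin m), R ≤ ‖θ‖ → c₁ * ‖θ‖ ^ γ ≤ f θ)
    (η : ℝ) (hη : 0 < η) :
    Integrable (fun θ => Real.exp (-f θ / η)) := by
  set r : ℝ := (m : ℝ) + 1 with hrdef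
  have hr : 0 < r := by positivity
  have ha : 0 < c₁ / η := div_pos hc₁ hη
  -- eventual one-dimensional bound
  have h1 : ∀ᶠ x : ℝ in atTop, Real.exp (-(c₁ / η) * x) ≤ x ^ (-(2 * r) / γ) := by
    have hb := (isLittleO_exp_neg_mul_rpow_atTop ha (-(2 * r) / γ)).bound one_pos
    filter_upwards [hb, eventually_gt_atTop 0] with x hx hx0
    rwa [Real.norm_eq_abs, Real.norm_eq_abs, abs_of_pos (Real.exp_pos _),
      abs_of_pos (Real.rpow_pos_of_pos hx0 _), one_mul] at hx
  have h2 : ∀ᶠ t : ℝ in atTop, Real.exp (-(c₁ / η) * t ^ γ) ≤ t ^ (-(2 * r)) := by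
    filter_upwards [(tendsto_rpow_atTop hγ).eventually h1, eventually_ge_atTop 1] with t ht ht1
    have ht0 : (0 : ℝ) < t := lt_of_lt_of_le one_pos ht1
    calc Real.exp (-(c₁ / η) * t ^ γ) ≤ (t ^ γ) ^ (-(2 * r) / γ) := ht
      _ = t ^ (-(2 * r)) := by
          rw [← Real.rpow_mul ht0.le]
          congr 1
          field_simp
  obtain ⟨T, hT⟩ := eventually_atTop.mp h2
  set T₀ : ℝ := max T (max R 2) with hT₀def
  set C : ℝ := max 1 ((1 + T₀) ^ r) with hCdef
  have hC1 : (1 : ℝ) ≤ C := le_max_left _ _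
  have key : ∀ θ : EuclideanSpace ℝ (Fin m),
      Real.exp (-f θ / η) ≤ C * (1 + ‖θ‖) ^ (-r) := by
    intro θ
    have hθ0 : (0 : ℝ) < 1 + ‖θ‖ := by positivity
    have hexp1 : Real.exp (-f θ / η) ≤ 1 := by
      rw [← Real.exp_zero]
      apply Real.exp_le_exp.2
      have := hf0 θ
      have : -f θ ≤ 0 := by linarith
      exact div_nonpos_of_nonpos_of_nonneg this hη.le
    rcases le_or_gt ‖θ‖ T₀ with h | h
    · have hpow : (1 + ‖θ‖) ^ r ≤ (1 + T₀) ^ r :=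
        Real.rpow_le_rpow (by positivity) (by linarith) hr.le
      have hone : (1 : ℝ) ≤ (1 + T₀) ^ r * (1 + ‖θ‖) ^ (-r) := by
        have hid : (1 + ‖θ‖) ^ r * (1 + ‖θ‖) ^ (-r) = 1 := by
          rw [← Real.rpow_add hθ0]; simp
        calc (1 : ℝ) = (1 + ‖θ‖) ^ r * (1 + ‖θ‖) ^ (-r) := hid.symm
          _ ≤ (1 + T₀) ^ r * (1 + ‖θ‖) ^ (-r) :=
            mul_le_mul_of_nonneg_right hpow (Real.rpow_nonneg hθ0.le _)
      calc Real.exp (-f θ / η) ≤ 1 := hexp1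
        _ ≤ (1 + T₀) ^ r * (1 + ‖θ‖) ^ (-r) := hone
        _ ≤ C * (1 + ‖θ‖) ^ (-r) :=
          mul_le_mul_of_nonneg_right (le_max_right _ _) (Real.rpow_nonneg hθ0.le _)
    · have hTle : T ≤ ‖θ‖ := le_trans (le_max_left _ _) h.le
      have hRle : R ≤ ‖θ‖ := le_trans (le_trans (le_max_left _ _) (le_max_right _ _)) h.le
      have h2le : (2 : ℝ) ≤ ‖θ‖ := le_trans (le_trans (le_max_right _ _) (le_max_right _ _)) h.le
      have ht0 : (0 : ℝ) < ‖θ‖ := by linarith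
      have step1 : Real.exp (-f θ / η) ≤ Real.exp (-(c₁ / η) * ‖θ‖ ^ γ) := by
        apply Real.exp_le_exp.2
        have h' : -f θ ≤ -(c₁ * ‖θ‖ ^ γ) := neg_le_neg (hgrow θ hRle)
        calc -f θ / η ≤ -(c₁ * ‖θ‖ ^ γ) / η := by gcongr
          _ = -(c₁ / η) * ‖θ‖ ^ γ := by ring
      have step2 : ‖θ‖ ^ (-(2 * r)) ≤ (1 + ‖θ‖) ^ (-r) := by
        have hle : 1 + ‖θ‖ ≤ ‖θ‖ * ‖θ‖ := by nlinarith
        have hp : (1 + ‖θ‖) ^ r ≤ (‖θ‖ * ‖θ‖) ^ r :=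
          Real.rpow_le_rpow (by positivity) hle hr.le
        have heq : (‖θ‖ * ‖θ‖) ^ r = ‖θ‖ ^ (2 * r) := by
          rw [show (2 : ℝ) * r = r + r by ring, Real.rpow_add ht0, ← Real.mul_rpow ht0.le ht0.le]
        rw [Real.rpow_neg ht0.le, Real.rpow_neg hθ0.le]
        exact inv_anti₀ (Real.rpow_pos_of_pos hθ0 _) (by rw [← heq] at *; exact hp.trans_eq rfl)
      calc Real.exp (-f θ / η) ≤ Real.exp (-(c₁ / η) * ‖θ‖ ^ γ) := step1
        _ ≤ ‖θ‖ ^ (-(2 * r)) := hT ‖θ‖ hTle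
        _ ≤ (1 + ‖θ‖) ^ (-r) := step2
        _ ≤ C * (1 + ‖θ‖) ^ (-r) :=
          le_mul_of_one_le_left (Real.rpow_nonneg hθ0.le _) hC1
  have hint : Integrable (fun θ : EuclideanSpace ℝ (Fin m) => C * (1 + ‖θ‖) ^ (-r)) := by
    refine (integrable_one_add_norm ?_).const_mul C
    rw [finrank_euclideanSpace_fin, hrdef]
    exact lt_add_one _
  refine hint.mono' ?_ (Eventually.of_forall fun θ => ?_)
  · exact ((hcont.neg.div_const η).rexp).aestronglyMeasurable
  · rw [Real.norm_eq_abs, abs_of_pos (Real.exp_pos _)]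
    exact key θ

/-- **Concentration of Gibbs measures on low sublevel sets.** Let `f ≥ 0` be `C²`,
vanishing somewhere, with `f(θ) ≥ c₁|θ|^γ` for `|θ| ≥ R`. Then for every `η > 0` the
Boltzmann density `exp(-f/η)` is integrable with positive total mass, and for every
`ε > 0` the Gibbs measures concentrate on `{f < ε}` as `η → 0⁺`:
`(∫_{f ≥ ε} e^{-f/η}) / (∫ e^{-f/η}) → 0`. -/
theorem gibbs_measures_concentrate_on_minima
    (m : ℕ) (hm : 1 ≤ m)
    (f : EuclideanSpace ℝ (Fin m) → ℝ) (hf0 : ∀ θ, 0 ≤ f θ) (hf : ContDiff ℝ 2 f)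
    (θbar : EuclideanSpace ℝ (Fin m)) (hθbar : f θbar = 0)
    (c₁ γ R : ℝ) (hc₁ : 0 < c₁) (hγ : 0 < γ) (hR : 0 < R)
    (hgrow : ∀ θ : EuclideanSpace ℝ (Fin m), R ≤ ‖θ‖ → c₁ * ‖θ‖ ^ γ ≤ f θ) :
    (∀ η : ℝ, 0 < η →
      Integrable (fun θ => Real.exp (-f θ / η)) ∧
      0 < ∫ θ, Real.exp (-f θ / η)) ∧
    ∀ ε : ℝ, 0 < ε →
      Tendsto (fun η : ℝ =>
          (∫ θ in {θ | ε ≤ f θ}, Real.exp (-f θ / η)) / ∫ θ, Real.exp (-f θ / η))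
        (𝓝[>] 0) (𝓝 0) := by
  have hcont : Continuous f := hf.continuous
  have hint : ∀ η : ℝ, 0 < η → Integrable (fun θ => Real.exp (-f θ / η)) :=
    gibbs_aux_integrable m f hf0 hcont c₁ γ R hc₁ hγ hgrow
  -- small sublevel neighbourhoods of θbar
  have hsmall : ∀ a : ℝ, 0 < a → ∃ δ : ℝ, 0 < δ ∧ ∀ θ ∈ closedBall θbar δ, f θ ≤ a := by
    intro a ha
    obtain ⟨δ, hδpos, hδ⟩ := Metric.continuousAt_iff.mp hcont.continuousAt a ha
    refine ⟨δ / 2, by positivity, fun θ hθ => ?_⟩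
    have hd : dist θ θbar < δ := lt_of_le_of_lt (mem_closedBall.mp hθ) (by linarith)
    have := hδ hd
    rw [Real.dist_eq, hθbar, sub_zero, abs_of_nonneg (hf0 θ)] at this
    exact this.le
  -- lower bound for the partition function
  have hlow : ∀ (a δ η : ℝ), 0 < η → 0 < δ → (∀ θ ∈ closedBall θbar δ, f θ ≤ a) →
      Real.exp (-a / η) * (volume (closedBall θbar δ)).toReal ≤ ∫ θ, Real.exp (-f θ / η) := by
    intro a δ η hη hδ hball
    have h1 : Real.exp (-a / η) * (volume (closedBall θbar δ)).toReal ≤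
        ∫ θ in closedBall θbar δ, Real.exp (-f θ / η) := by
      apply setIntegral_ge_of_const_le_real measurableSet_closedBall measure_closedBall_lt_top.ne
      · intro θ hθ
        apply Real.exp_le_exp.2
        have := hball θ hθ
        have h' : -a ≤ -f θ := by linarith
        gcongr
      · exact (hint η hη).integrableOn
    exact h1.trans (setIntegral_le_integral (hint η hη)
      (ae_of_all _ fun θ => (Real.exp_pos _).le))
  have hVpos : ∀ δ : ℝ, 0 < δ → 0 < (volume (closedBall θbar δ)).toReal := by
    intro δ hδ
    rw [ENNReal.toReal_pos_iff]
    exact ⟨measure_closedBall_pos volume θbar hδ, measure_closedBall_lt_top⟩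
  have hpos : ∀ η : ℝ, 0 < η → 0 < ∫ θ, Real.exp (-f θ / η) := by
    intro η hη
    obtain ⟨δ, hδ, hball⟩ := hsmall 1 one_pos
    have := hlow 1 δ η hη hδ hball
    have hV := hVpos δ hδ
    nlinarith [Real.exp_pos (-1 / η)]
  refine ⟨fun η hη => ⟨hint η hη, hpos η hη⟩, ?_⟩
  intro ε hε
  obtain ⟨δ, hδ, hball⟩ := hsmall (ε / 4) (by positivity)
  set V : ℝ := (volume (closedBall θbar δ)).toReal with hVdef
  have hV : 0 < V := hVpos δ hδ
  set C : ℝ := ∫ θ, Real.exp (-f θ / 2) with hCdef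
  have hC : 0 < C := hpos 2 two_pos
  have hs : MeasurableSet {θ : EuclideanSpace ℝ (Fin m) | ε ≤ f θ} :=
    measurableSet_le measurable_const hcont.measurable
  have hmono : ∀ η : ℝ, 0 < η → η ≤ 1 →
      (∫ θ in {θ | ε ≤ f θ}, Real.exp (-f θ / η)) / (∫ θ, Real.exp (-f θ / η)) ≤
        C / V * Real.exp (-(ε / 4) / η) := by
    intro η hη hη1
    have hnum : (∫ θ in {θ | ε ≤ f θ}, Real.exp (-f θ / η)) ≤
        Real.exp (-(ε / 2) / η) * C := by
      have step : ∀ θ ∈ {θ : EuclideanSpace ℝ (Fin m) | ε ≤ f θ},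
          Real.exp (-f θ / η) ≤ Real.exp (-(ε / 2) / η) * Real.exp (-f θ / 2) := by
        intro θ hθ
        rw [← Real.exp_add]
        apply Real.exp_le_exp.2
        have hfθ : ε ≤ f θ := hθ
        have hu : 1 ≤ η⁻¹ := (one_le_inv₀ hη).mpr hη1
        rw [div_eq_mul_inv, div_eq_mul_inv, div_eq_mul_inv]
        nlinarith [mul_nonneg (sub_nonneg.mpr hu) (by linarith : (0:ℝ) ≤ f θ - ε / 2)]
      calc (∫ θ in {θ | ε ≤ f θ}, Real.exp (-f θ / η))
          ≤ ∫ θ in {θ | ε ≤ f θ}, Real.exp (-(ε / 2) / η) * Real.exp (-f θ / 2) :=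
            setIntegral_mono_on ((hint η hη).integrableOn)
              (((hint 2 two_pos).const_mul _).integrableOn) hs step
        _ = Real.exp (-(ε / 2) / η) * ∫ θ in {θ | ε ≤ f θ}, Real.exp (-f θ / 2) := by
            rw [integral_const_mul]
        _ ≤ Real.exp (-(ε / 2) / η) * C :=
            mul_le_mul_of_nonneg_left
              (setIntegral_le_integral (hint 2 two_pos)
                (ae_of_all _ fun θ => (Real.exp_pos _).le)) (Real.exp_pos _).le
    have hden : Real.exp (-(ε / 4) / η) * V ≤ ∫ θ, Real.exp (-f θ / η) :=
      hlow (ε / 4) δ η hη hδ hball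
    have hmain := div_le_div₀ (by positivity) hnum (by positivity) hden
    refine hmain.trans_eq ?_
    have hsplit : Real.exp (-(ε / 2) / η) =
        Real.exp (-(ε / 4) / η) * Real.exp (-(ε / 4) / η) := by
      rw [← Real.exp_add]; congr 1; ring
    rw [hsplit]
    field_simp
  apply squeeze_zero' (g := fun η : ℝ => C / V * Real.exp (-(ε / 4) / η))
  · filter_upwards [self_mem_nhdsWithin] with η hη
    exact div_nonneg (setIntegral_nonneg hs fun θ _ => (Real.exp_pos _).le)
      (hpos η hη).le
  · filter_upwards [Ioc_mem_nhdsGT_of_mem ⟨le_refl (0:ℝ), zero_lt_one⟩] with η hη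
    exact hmono η hη.1 hη.2
  · have h1 : Tendsto (fun η : ℝ => (ε / 4) * η⁻¹) (𝓝[>] 0) atTop :=
      Tendsto.const_mul_atTop (by positivity) tendsto_inv_nhdsGT_zero
    have h2 : Tendsto (fun η : ℝ => -(ε / 4) / η) (𝓝[>] 0) atBot := by
      have := tendsto_neg_atTop_atBot.comp h1
      refine this.congr fun η => ?_
      simp [Function.comp, neg_div, div_eq_mul_inv]
    have h3 : Tendsto (fun η : ℝ => Real.exp (-(ε / 4) / η)) (𝓝[>] 0) (𝓝 0) :=
      Real.tendsto_exp_atBot.comp h2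
    simpa using h3.const_mul (C / V)
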